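/- arXiv:1809.04363 — 4 statements merged into one kernel-verified Lean document; each statement's English description precedes it below -/
import Mathlib

section
/- Let H = [0,1]^N be the unit hypercube and H_V = {0,1}^N its vertex set. For any two vertices x_k, x_j ∈ H_V, the set B_kj = {x ∈ H : x_k·x = x_j·x} equals the convex hull of H_kj = {h ∈ H_V : x_k·h = x_j·h}. -/
/-- Standard inner product on `Fin N → ℝ`. -/
noncomputable def dotp {N : ℕ} (a b : Fin N → ℝ) : ℝ := ∑ i, a i * b i

/-- The unit hypercube `[0,1]^N`. -/
def unitCube (N : ℕ) : Set (Fin N → ℝ) := {x | ∀ i, x i ∈ Set.Icc (0:ℝ) 1}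

/-- Vertices of the unit hypercube: 0/1-valued vectors. -/
def cubeVerts (N : ℕ) : Set (Fin N → ℝ) := {x | ∀ i, x i = 0 ∨ x i = 1}

lemma halfstep {N : ℕ} (c x d : Fin N → ℝ) (hx : x ∈ unitCube N)
    (hd : ∀ j, d j = -1 ∨ d j = 0 ∨ d j = 1)
    (hsupp : ∀ j, d j ≠ 0 → x j ≠ 0 ∧ x j ≠ 1)
    (i₀ : Fin N) (h0 : d i₀ ≠ 0)
    (hcd : ∑ j, c j * d j = 0) :
    ∃ t : ℝ, 0 < t ∧ (fun j => x j + t * d j) ∈ unitCube N ∧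
      (∑ j, c j * (x j + t * d j)) = ∑ j, c j * x j ∧
      (Finset.univ.filter fun j => x j + t * d j ≠ 0 ∧ x j + t * d j ≠ 1).card <
        (Finset.univ.filter fun j => x j ≠ 0 ∧ x j ≠ 1).card := by
  classical
  set Fd : Finset (Fin N) := Finset.univ.filter (fun j => d j ≠ 0) with hFd
  have hne : Fd.Nonempty := ⟨i₀, by simp [hFd, h0]⟩
  have hfrac : ∀ j ∈ Fd, 0 < x j ∧ x j < 1 := by
    intro j hj
    have hdj : d j ≠ 0 := by simpa [hFd] using hj
    obtain ⟨h1, h2⟩ := hsupp j hdj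
    obtain ⟨hl, hr⟩ := hx j
    exact ⟨lt_of_le_of_ne hl (Ne.symm h1), lt_of_le_of_ne hr h2⟩
  set val : Fin N → ℝ := fun j => if d j = 1 then 1 - x j else x j with hval
  set t : ℝ := Fd.inf' hne val with hT
  have ht : 0 < t := by
    rw [hT, Finset.lt_inf'_iff]
    intro j hj
    obtain ⟨h1, h2⟩ := hfrac j hj
    by_cases h : d j = 1 <;> simp [hval, h, h1, h2]
  have hle : ∀ j ∈ Fd, t ≤ val j := fun j hj => Finset.inf'_le val hj
  refine ⟨t, ht, ?_, ?_, ?_⟩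
  · -- cube membership
    intro j
    simp only [Set.mem_Icc]
    rcases hd j with h | h | h
    · have hj : j ∈ Fd := by simp [hFd, h]
      obtain ⟨h1, h2⟩ := hfrac j hj
      have hlv := hle j hj
      have hv : val j = x j := by rw [hval]; simp only [h]; norm_num
      rw [hv] at hlv
      have he : x j + t * d j = x j - t := by rw [h]; ring
      rw [he]
      constructor <;> linarith
    · obtain ⟨hl, hr⟩ := hx j
      have he : x j + t * d j = x j := by rw [h]; ring
      rw [he]; exact ⟨hl, hr⟩
    · have hj : j ∈ Fd := by simp [hFd, h]
      obtain ⟨h1, h2⟩ := hfrac j hj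
      have hlv := hle j hj
      have hv : val j = 1 - x j := by simp [hval, h]
      rw [hv] at hlv
      have he : x j + t * d j = x j + t := by rw [h]; ring
      rw [he]
      constructor <;> linarith
  · -- sum preserved
    have hh : ∀ j ∈ Finset.univ, c j * (x j + t * d j) = c j * x j + t * (c j * d j) :=
      fun j _ => by ring
    rw [Finset.sum_congr rfl hh, Finset.sum_add_distrib, ← Finset.mul_sum, hcd,
      mul_zero, add_zero]
  · -- fewer fractional coordinates
    apply Finset.card_lt_card
    have hsub : (Finset.univ.filter fun j => x j + t * d j ≠ 0 ∧ x j + t * d j ≠ 1) ⊆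
        (Finset.univ.filter fun j => x j ≠ 0 ∧ x j ≠ 1) := by
      intro j hj
      simp only [Finset.mem_filter, Finset.mem_univ, true_and] at hj ⊢
      by_cases h : d j = 0
      · rw [h] at hj; simpa using hj
      · exact hsupp j h
    rw [Finset.ssubset_iff_of_subset hsub]
    obtain ⟨j₀, hj₀, hj₀e⟩ := Finset.exists_mem_eq_inf' hne val
    rw [← hT] at hj₀e
    have hd0 : d j₀ ≠ 0 := by simpa [hFd] using hj₀
    refine ⟨j₀, ?_, ?_⟩
    · simp only [Finset.mem_filter, Finset.mem_univ, true_and]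
      exact hsupp j₀ hd0
    · simp only [Finset.mem_filter, Finset.mem_univ, true_and, not_and_or, ne_eq, not_not]
      rcases hd j₀ with hh | hh | hh
      · left
        have hv : val j₀ = x j₀ := by rw [hval]; simp only [hh]; norm_num
        rw [hj₀e, hv, hh]; ring
      · exact absurd hh hd0
      · right
        have hv : val j₀ = 1 - x j₀ := by simp [hval, hh]
        rw [hj₀e, hv, hh]; ring

lemma step {N : ℕ} (c x d : Fin N → ℝ) (hx : x ∈ unitCube N)
    (hd : ∀ j, d j = -1 ∨ d j = 0 ∨ d j = 1)
    (hsupp : ∀ j, d j ≠ 0 → x j ≠ 0 ∧ x j ≠ 1)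
    (i₀ : Fin N) (h0 : d i₀ ≠ 0)
    (hcd : ∑ j, c j * d j = 0) :
    ∃ y z : Fin N → ℝ, ∃ a : ℝ,
      y ∈ unitCube N ∧ z ∈ unitCube N ∧
      (∑ j, c j * y j) = (∑ j, c j * x j) ∧
      (∑ j, c j * z j) = (∑ j, c j * x j) ∧
      (Finset.univ.filter fun j => y j ≠ 0 ∧ y j ≠ 1).card <
        (Finset.univ.filter fun j => x j ≠ 0 ∧ x j ≠ 1).card ∧
      (Finset.univ.filter fun j => z j ≠ 0 ∧ z j ≠ 1).card <
        (Finset.univ.filter fun j => x j ≠ 0 ∧ x j ≠ 1).card ∧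
      0 ≤ a ∧ a ≤ 1 ∧ a • y + (1 - a) • z = x := by
  obtain ⟨t, ht, hy1, hy2, hy3⟩ := halfstep c x d hx hd hsupp i₀ h0 hcd
  have hd' : ∀ j, (-d) j = -1 ∨ (-d) j = 0 ∨ (-d) j = 1 := by
    intro j
    rcases hd j with h | h | h <;> simp [h]
  have hsupp' : ∀ j, (-d) j ≠ 0 → x j ≠ 0 ∧ x j ≠ 1 := by
    intro j hj
    exact hsupp j (by simpa using hj)
  have h0' : (-d) i₀ ≠ 0 := by simpa using h0
  have hcd' : ∑ j, c j * (-d) j = 0 := by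
    simp only [Pi.neg_apply, mul_neg]
    rw [Finset.sum_neg_distrib, hcd, neg_zero]
  obtain ⟨s, hs, hz1, hz2, hz3⟩ := halfstep c x (-d) hx hd' hsupp' i₀ h0' hcd'
  refine ⟨_, _, s / (t + s), hy1, hz1, hy2, hz2, hy3, hz3, ?_, ?_, ?_⟩
  · positivity
  · rw [div_le_one (by linarith)]; linarith
  · funext j
    have hts : t + s ≠ 0 := by positivity
    simp only [Pi.add_apply, Pi.smul_apply, smul_eq_mul, Pi.neg_apply]
    field_simp
    ring

lemma key {N : ℕ} (c : Fin N → ℝ) (hc : ∀ i, c i = -1 ∨ c i = 0 ∨ c i = 1) (n : ℕ) :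
    ∀ x : Fin N → ℝ,
      (Finset.univ.filter fun j => x j ≠ 0 ∧ x j ≠ 1).card = n →
      x ∈ unitCube N → (∑ j, c j * x j) = 0 →
      x ∈ convexHull ℝ {h ∈ cubeVerts N | (∑ j, c j * h j) = 0} := by
  classical
  induction n using Nat.strong_induction_on with
  | _ n IH =>
    intro x hcard hx hsum
    by_cases hF : (Finset.univ.filter fun j => x j ≠ 0 ∧ x j ≠ 1) = ∅
    · -- x is a vertex
      apply subset_convexHull
      refine ⟨?_, hsum⟩
      intro i
      have : i ∉ (Finset.univ.filter fun j => x j ≠ 0 ∧ x j ≠ 1) := by simp [hF]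
      simp only [Finset.mem_filter, Finset.mem_univ, true_and, not_and_or, ne_eq,
        not_not] at this
      tauto
    · obtain ⟨i, hi⟩ := Finset.nonempty_iff_ne_empty.mpr hF
      have hifrac : x i ≠ 0 ∧ x i ≠ 1 := by simpa using hi
      -- find a direction d
      have hdir : ∃ d : Fin N → ℝ, (∀ j, d j = -1 ∨ d j = 0 ∨ d j = 1) ∧
          (∀ j, d j ≠ 0 → x j ≠ 0 ∧ x j ≠ 1) ∧ (∃ i₀, d i₀ ≠ 0) ∧
          (∑ j, c j * d j) = 0 := by
        by_cases hz : ∃ j ∈ (Finset.univ.filter fun j => x j ≠ 0 ∧ x j ≠ 1), c j = 0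
        · obtain ⟨j₀, hj₀, hcj₀⟩ := hz
          have hj₀f : x j₀ ≠ 0 ∧ x j₀ ≠ 1 := by simpa using hj₀
          refine ⟨fun j => if j = j₀ then 1 else 0, ?_, ?_, ⟨j₀, by simp⟩, ?_⟩
          · intro j; by_cases h : j = j₀ <;> simp [h]
          · intro j hj
            by_cases h : j = j₀
            · rw [h]; exact hj₀f
            · simp [h] at hj
          · simp [mul_ite, mul_one, mul_zero, Finset.sum_ite_eq', hcj₀]
        · push_neg at hz
          have hci : c i ≠ 0 := hz i hi
          -- find a second fractional coordinate
          have hi' : ∃ i' ∈ (Finset.univ.filter fun j => x j ≠ 0 ∧ x j ≠ 1), i' ≠ i := by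
            by_contra hno
            push_neg at hno
            have hothers : ∀ j, j ≠ i → x j = 0 ∨ x j = 1 := by
              intro j hj
              by_contra hcon
              push_neg at hcon
              exact hj (hno j (by simp [hcon.1, hcon.2]))
            have hint : ∃ m : ℤ, (∑ j ∈ Finset.univ.erase i, c j * x j) = (m : ℝ) := by
              refine Finset.sum_induction _ (fun r => ∃ m : ℤ, r = (m : ℝ)) ?_ ⟨0, by simp⟩ ?_
              · rintro a b ⟨ma, rfl⟩ ⟨mb, rfl⟩
                exact ⟨ma + mb, by push_cast; ring⟩
              · intro j hj
                have hjne : j ≠ i := Finset.ne_of_mem_erase hj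
                rcases hc j with h | h | h <;> rcases hothers j hjne with h2 | h2
                · exact ⟨0, by rw [h, h2]; norm_num⟩
                · exact ⟨-1, by rw [h, h2]; norm_num⟩
                · exact ⟨0, by rw [h, h2]; norm_num⟩
                · exact ⟨0, by rw [h, h2]; norm_num⟩
                · exact ⟨0, by rw [h, h2]; norm_num⟩
                · exact ⟨1, by rw [h, h2]; norm_num⟩
            obtain ⟨m, hm⟩ := hint
            have hsplit : c i * x i + ∑ j ∈ Finset.univ.erase i, c j * x j
                = ∑ j, c j * x j :=
              Finset.add_sum_erase _ (fun j => c j * x j) (Finset.mem_univ i)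
            rw [hm, hsum] at hsplit
            have hxi : c i * x i = -(m : ℝ) := by linarith
            have hx0 : 0 < x i := lt_of_le_of_ne (hx i).1 (Ne.symm hifrac.1)
            have hx1 : x i < 1 := lt_of_le_of_ne (hx i).2 hifrac.2
            rcases hc i with h | h | h
            · rw [h] at hxi
              have f1 : (0:ℤ) < m := by
                exact_mod_cast (show (0:ℝ) < (m : ℝ) by linarith)
              have f2 : m < 1 := by
                exact_mod_cast (show ((m : ℤ) : ℝ) < 1 by push_cast; linarith)
              omega
            · exact hci h
            · rw [h, one_mul] at hxi
              have f1 : (0:ℤ) < -m := by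
                exact_mod_cast (show (0:ℝ) < ((-m : ℤ) : ℝ) by push_cast; linarith)
              have f2 : -m < 1 := by
                exact_mod_cast (show ((-m : ℤ) : ℝ) < 1 by push_cast; linarith)
              omega
          obtain ⟨i', hi'mem, hi'ne⟩ := hi'
          have hci' : c i' ≠ 0 := hz i' hi'mem
          have hi'frac : x i' ≠ 0 ∧ x i' ≠ 1 := by simpa using hi'mem
          have hne2 : i ≠ i' := Ne.symm hi'ne
          refine ⟨fun j => (if j = i then (1:ℝ) else 0) +
              (if j = i' then -(c i * c i') else 0), ?_, ?_, ⟨i, ?_⟩, ?_⟩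
          · intro j
            by_cases h1 : j = i
            · have h2 : j ≠ i' := by rw [h1]; exact hne2
              simp [h1, h2, hne2]
            · by_cases h2 : j = i'
              · beta_reduce
                rw [if_neg h1, if_pos h2, zero_add]
                rcases hc i with g | g | g
                · rcases hc i' with g' | g' | g'
                  · norm_num [g, g']
                  · exact absurd g' hci'
                  · norm_num [g, g']
                · exact absurd g hci
                · rcases hc i' with g' | g' | g'
                  · norm_num [g, g']
                  · exact absurd g' hci'
                  · norm_num [g, g']
              · simp [h1, h2]
          · intro j hj
            by_cases h1 : j = i
            · rw [h1]; exact hifrac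
            · by_cases h2 : j = i'
              · rw [h2]; exact hi'frac
              · simp [h1, h2] at hj
          · beta_reduce
            rw [if_pos rfl, if_neg hne2, add_zero]
            norm_num
          · have expand : ∀ j ∈ Finset.univ,
                c j * ((if j = i then (1:ℝ) else 0) + (if j = i' then -(c i * c i') else 0))
                = (if j = i then c j else 0) + (if j = i' then c j * -(c i * c i') else 0) := by
              intro j _
              by_cases h1 : j = i
              · have h2 : j ≠ i' := by rw [h1]; exact hne2
                rw [if_pos h1, if_neg h2, if_pos h1, if_neg h2]; ring
              · by_cases h2 : j = i'
                · rw [if_neg h1, if_pos h2, if_neg h1, if_pos h2]; ring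
                · rw [if_neg h1, if_neg h2, if_neg h1, if_neg h2]; ring
            rw [Finset.sum_congr rfl expand, Finset.sum_add_distrib]
            rw [Finset.sum_ite_eq' Finset.univ i c, Finset.sum_ite_eq' Finset.univ i'
              (fun j => c j * -(c i * c i'))]
            simp only [Finset.mem_univ, if_pos]
            rcases hc i' with g | g | g
            · rw [g]; ring
            · exact absurd g hci'
            · rw [g]; ring
      obtain ⟨d, hd, hsupp, ⟨i₀, h0⟩, hcd⟩ := hdir
      obtain ⟨y, z, a, hy1, hz1, hy2, hz2, hy3, hz3, ha0, ha1, hcomb⟩ :=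
        step c x d hx hd hsupp i₀ h0 hcd
      rw [hcard] at hy3 hz3
      have hyhull := IH _ hy3 y rfl hy1 (by rw [hy2]; exact hsum)
      have hzhull := IH _ hz3 z rfl hz1 (by rw [hz2]; exact hsum)
      have hb0 : (0:ℝ) ≤ 1 - a := by linarith
      have hab : a + (1 - a) = 1 := by ring
      have := (convex_convexHull ℝ {h ∈ cubeVerts N | (∑ j, c j * h j) = 0})
        hyhull hzhull ha0 hb0 hab
      rwa [hcomb] at this

theorem stmt_2 {N : ℕ} (xk xj : Fin N → ℝ)
    (hxk : xk ∈ cubeVerts N) (hxj : xj ∈ cubeVerts N) :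
    {x ∈ unitCube N | dotp xk x = dotp xj x} =
      convexHull ℝ {h ∈ cubeVerts N | dotp xk h = dotp xj h} := by
  classical
  set c : Fin N → ℝ := fun i => xk i - xj i with hcdef
  have hc : ∀ i, c i = -1 ∨ c i = 0 ∨ c i = 1 := by
    intro i
    rcases hxk i with h | h <;> rcases hxj i with h2 | h2 <;> simp [hcdef, h, h2]
  have hlin : ∀ v : Fin N → ℝ, (∑ j, c j * v j) = dotp xk v - dotp xj v := by
    intro v
    rw [dotp, dotp, ← Finset.sum_sub_distrib]
    refine Finset.sum_congr rfl fun j _ => ?_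
    simp only [hcdef]; ring
  have hsets : {h ∈ cubeVerts N | (∑ j, c j * h j) = 0} =
      {h ∈ cubeVerts N | dotp xk h = dotp xj h} := by
    ext h
    constructor
    · rintro ⟨hv, he⟩
      refine ⟨hv, ?_⟩
      rw [hlin h] at he
      linarith
    · rintro ⟨hv, he⟩
      refine ⟨hv, ?_⟩
      rw [hlin h, he, sub_self]
  ext x
  constructor
  · rintro ⟨hxc, hxe⟩
    have := key c hc _ x rfl hxc (by rw [hlin x, hxe, sub_self])
    rwa [hsets] at this
  · intro hx
    have hsub : {h ∈ cubeVerts N | dotp xk h = dotp xj h} ⊆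
        {x ∈ unitCube N | dotp xk x = dotp xj x} := by
      rintro h ⟨hv, he⟩
      refine ⟨fun i => ?_, he⟩
      rcases hv i with h' | h' <;> rw [h'] <;> norm_num
    have hconv : Convex ℝ {x ∈ unitCube N | dotp xk x = dotp xj x} := by
      rintro u ⟨hu1, hu2⟩ v ⟨hv1, hv2⟩ a b ha hb hab
      have hlin2 : ∀ w : Fin N → ℝ, dotp w (a • u + b • v) = a * dotp w u + b * dotp w v := by
        intro w
        simp only [dotp, Pi.add_apply, Pi.smul_apply, smul_eq_mul, Finset.mul_sum,
          ← Finset.sum_add_distrib]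
        refine Finset.sum_congr rfl fun j _ => ?_
        ring
      refine ⟨fun i => ?_, ?_⟩
      · obtain ⟨hu3, hu4⟩ := hu1 i
        obtain ⟨hv3, hv4⟩ := hv1 i
        simp only [Pi.add_apply, Pi.smul_apply, smul_eq_mul, Set.mem_Icc]
        constructor
        · have := mul_nonneg ha hu3
          have := mul_nonneg hb hv3
          linarith
        · nlinarith
      · rw [hlin2, hlin2, hu2, hv2]
    exact convexHull_min hsub hconv hx
end

section
/- Let H = [0,1]^N and H_V = {0,1}^N. For any three vertices x_k, x_j, x_l ∈ H_V, the set B_kjl = {x ∈ H : x_k·x = x_j·x = x_l·x} equals the convex hull of H_kjl = {h ∈ H_V : x_k·h = x_j·h = x_l·h}. -/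
open Finset


open scoped Classical in
noncomputable def fracSet {N : ℕ} (x : Fin N → ℝ) : Finset (Fin N) :=
  Finset.univ.filter (fun m => x m ≠ 0 ∧ x m ≠ 1)

lemma mem_fracSet {N : ℕ} {x : Fin N → ℝ} {m : Fin N} :
    m ∈ fracSet x ↔ (x m ≠ 0 ∧ x m ≠ 1) := by
  simp [fracSet]

lemma dotp_add_smul {N : ℕ} (a x d : Fin N → ℝ) (u : ℝ) :
    dotp a (x + u • d) = dotp a x + u * dotp a d := by
  simp only [dotp, Pi.add_apply, Pi.smul_apply, smul_eq_mul, mul_add, Finset.sum_add_distrib,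
    Finset.mul_sum]
  congr 1; apply Finset.sum_congr rfl; intros; ring

lemma dotp_sub_smul {N : ℕ} (a x d : Fin N → ℝ) (u : ℝ) :
    dotp a (x - u • d) = dotp a x - u * dotp a d := by
  simp only [dotp, Pi.sub_apply, Pi.smul_apply, smul_eq_mul, mul_sub, Finset.sum_sub_distrib,
    Finset.mul_sum]
  congr 1; apply Finset.sum_congr rfl; intros; ring

lemma dotp_combo {N : ℕ} (a y z : Fin N → ℝ) (p q : ℝ) :
    dotp a (p • y + q • z) = p * dotp a y + q * dotp a z := by
  simp only [dotp, Pi.add_apply, Pi.smul_apply, smul_eq_mul, mul_add, Finset.sum_add_distrib,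
    Finset.mul_sum]
  congr 1 <;> (apply Finset.sum_congr rfl; intros; ring)

lemma dotp_sub_eq {N : ℕ} (p q d : Fin N → ℝ) :
    dotp p d - dotp q d = ∑ m, (p m - q m) * d m := by
  simp only [dotp, ← Finset.sum_sub_distrib, sub_mul]

lemma sum_int {N : ℕ} {s : Finset (Fin N)} {g : Fin N → ℝ}
    (h : ∀ m ∈ s, ∃ z : ℤ, g m = z) : ∃ z : ℤ, ∑ m ∈ s, g m = z := by
  classical
  induction s using Finset.induction with
  | empty => exact ⟨0, by simp⟩
  | @insert c s' hns ih =>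
    obtain ⟨z, hz⟩ := h c (Finset.mem_insert_self _ _)
    obtain ⟨w, hw⟩ := ih (fun m hm => h m (Finset.mem_insert_of_mem hm))
    exact ⟨z + w, by rw [Finset.sum_insert hns, hz, hw]; push_cast; ring⟩

lemma not_int_frac {p : ℝ} (h0 : 0 ≤ p) (h1 : p ≤ 1) (hn0 : p ≠ 0) (hn1 : p ≠ 1)
    (z : ℤ) (hz : p = z) : False := by
  have h0' : (0:ℤ) ≤ z := by exact_mod_cast hz ▸ h0
  have h1' : z ≤ 1 := by exact_mod_cast hz ▸ h1
  interval_cases z <;> simp_all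

lemma sum_ind1 {N : ℕ} (a : Fin N → ℝ) (i : Fin N) (c : ℝ) :
    ∑ m, a m * (if m = i then c else 0) = a i * c := by
  rw [Finset.sum_eq_single i]
  · simp
  · intro b _ hb; simp [hb]
  · intro h; exact absurd (Finset.mem_univ i) h

lemma sum_ind2 {N : ℕ} (a : Fin N → ℝ) (i j : Fin N) (hij : i ≠ j) (c₁ c₂ : ℝ) :
    ∑ m, a m * (if m = i then c₁ else if m = j then c₂ else 0) = a i * c₁ + a j * c₂ := by
  rw [← Finset.sum_subset (Finset.subset_univ ({i, j} : Finset (Fin N)))]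
  · rw [show ({i, j} : Finset (Fin N)) = insert i {j} from rfl,
      Finset.sum_insert (by simp [hij]), Finset.sum_singleton]
    simp [hij, Ne.symm hij]
  · intro m _ hm
    simp only [Finset.mem_insert, Finset.mem_singleton, not_or] at hm
    simp [hm.1, hm.2]

lemma sum_ind3 {N : ℕ} (a : Fin N → ℝ) (i j k : Fin N) (hij : i ≠ j) (hik : i ≠ k)
    (hjk : j ≠ k) (c₁ c₂ c₃ : ℝ) :
    ∑ m, a m * (if m = i then c₁ else if m = j then c₂ else if m = k then c₃ else 0) =
      a i * c₁ + a j * c₂ + a k * c₃ := by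
  rw [← Finset.sum_subset (Finset.subset_univ ({i, j, k} : Finset (Fin N)))]
  · rw [show ({i, j, k} : Finset (Fin N)) = insert i (insert j {k}) from rfl,
      Finset.sum_insert (by simp [hij, hik]), Finset.sum_insert (by simp [hjk]),
      Finset.sum_singleton]
    simp [hij, hik, hjk, Ne.symm hij, Ne.symm hik, Ne.symm hjk]
    ring
  · intro m _ hm
    simp only [Finset.mem_insert, Finset.mem_singleton, not_or] at hm
    simp [hm.1, hm.2.1, hm.2.2]

lemma row_contra {N : ℕ} (x r : Fin N → ℝ) (hx : ∀ i, 0 ≤ x i ∧ x i ≤ 1)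
    (hr : ∀ m, ∃ z : ℤ, r m = z)
    (hsum : ∑ m, r m * x m = 0)
    (i : Fin N) (hi : x i ≠ 0 ∧ x i ≠ 1) (hri : r i = 1 ∨ r i = -1)
    (hother : ∀ m, m ≠ i → (x m ≠ 0 ∧ x m ≠ 1) → r m = 0) : False := by
  classical
  have hsplit : ∑ m, r m * x m = r i * x i + ∑ m ∈ Finset.univ.erase i, r m * x m :=
    (Finset.add_sum_erase _ _ (Finset.mem_univ i)).symm
  have hrest : ∃ z : ℤ, ∑ m ∈ Finset.univ.erase i, r m * x m = z := by
    apply sum_int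
    intro m hm
    have hmi : m ≠ i := (Finset.mem_erase.mp hm).1
    by_cases hfr : x m ≠ 0 ∧ x m ≠ 1
    · exact ⟨0, by rw [hother m hmi hfr]; push_cast; ring⟩
    · push_neg at hfr
      obtain ⟨z, hz⟩ := hr m
      by_cases h0 : x m = 0
      · exact ⟨0, by rw [h0]; push_cast; ring⟩
      · exact ⟨z, by rw [hfr h0, hz]; push_cast; ring⟩
  obtain ⟨z, hz⟩ := hrest
  rw [hsplit, hz] at hsum
  rcases hri with h | h
  · rw [h, one_mul] at hsum
    exact not_int_frac (hx i).1 (hx i).2 hi.1 hi.2 (-z) (by push_cast; linarith)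
  · rw [h] at hsum
    exact not_int_frac (hx i).1 (hx i).2 hi.1 hi.2 z (by push_cast; linarith)

lemma step_lemma {N : ℕ} (xk xj xl x : Fin N → ℝ)
    (hx : ∀ i, 0 ≤ x i ∧ x i ≤ 1)
    (h1 : dotp xk x = dotp xj x) (h2 : dotp xj x = dotp xl x)
    (T : Finset (Fin N)) (hT : T.Nonempty) (d : Fin N → ℝ)
    (hd1 : ∀ m ∈ T, d m = 1 ∨ d m = -1) (hd0 : ∀ m ∉ T, d m = 0)
    (hTf : ∀ m ∈ T, x m ≠ 0 ∧ x m ≠ 1)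
    (hdk : dotp xk d = dotp xj d) (hdl : dotp xj d = dotp xl d) :
    ∃ y z : Fin N → ℝ, (∀ i, 0 ≤ y i ∧ y i ≤ 1) ∧ (∀ i, 0 ≤ z i ∧ z i ≤ 1) ∧
      dotp xk y = dotp xj y ∧ dotp xj y = dotp xl y ∧
      dotp xk z = dotp xj z ∧ dotp xj z = dotp xl z ∧
      fracSet y ⊂ fracSet x ∧ fracSet z ⊂ fracSet x ∧
      ∃ p q : ℝ, 0 ≤ p ∧ 0 ≤ q ∧ p + q = 1 ∧ x = p • y + q • z := by
  classical
  have hTx : ∀ m ∈ T, 0 < x m ∧ x m < 1 := by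
    intro m hm
    obtain ⟨h0, h1'⟩ := hTf m hm
    exact ⟨lt_of_le_of_ne (hx m).1 (Ne.symm h0), lt_of_le_of_ne (hx m).2 h1'⟩
  set f : Fin N → ℝ := fun m => if d m = 1 then 1 - x m else x m with hf
  set g : Fin N → ℝ := fun m => if d m = 1 then x m else 1 - x m with hg
  have hTne : (T.image f).Nonempty := hT.image f
  have hTne' : (T.image g).Nonempty := hT.image g
  set u := (T.image f).min' hTne with hu
  set v := (T.image g).min' hTne' with hv
  have hule : ∀ m ∈ T, u ≤ f m := fun m hm =>
    Finset.min'_le _ _ (Finset.mem_image_of_mem f hm)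
  have hvle : ∀ m ∈ T, v ≤ g m := fun m hm =>
    Finset.min'_le _ _ (Finset.mem_image_of_mem g hm)
  obtain ⟨m₀, hm₀T, hm₀⟩ := Finset.mem_image.mp ((T.image f).min'_mem hTne)
  obtain ⟨n₀, hn₀T, hn₀⟩ := Finset.mem_image.mp ((T.image g).min'_mem hTne')
  have hfpos : ∀ m ∈ T, 0 < f m := by
    intro m hm
    by_cases h : d m = 1 <;> simp only [hf, h, if_true, if_false, sub_pos] <;>
      first | exact (hTx m hm).2 | simp [h, (hTx m hm).1]
  have hgpos : ∀ m ∈ T, 0 < g m := by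
    intro m hm
    by_cases h : d m = 1 <;> simp only [hg, h, if_true, if_false, sub_pos] <;>
      first | exact (hTx m hm).1 | simp [h, (hTx m hm).2]
  have hufm : u = f m₀ := hm₀.symm
  have hvgn : v = g n₀ := hn₀.symm
  have hupos : 0 < u := by rw [hufm]; exact hfpos m₀ hm₀T
  have hvpos : 0 < v := by rw [hvgn]; exact hgpos n₀ hn₀T
  set y := x + u • d with hy
  set z := x - v • d with hz
  have hyap : ∀ m, y m = x m + u * d m := fun m => rfl
  have hzap : ∀ m, z m = x m - v * d m := fun m => rfl
  have hyoff : ∀ m ∉ T, y m = x m := by intro m hm; rw [hyap, hd0 m hm]; ring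
  have hzoff : ∀ m ∉ T, z m = x m := by intro m hm; rw [hzap, hd0 m hm]; ring
  have hycube : ∀ i, 0 ≤ y i ∧ y i ≤ 1 := by
    intro i
    by_cases hi : i ∈ T
    · rcases hd1 i hi with h | h
      · have := hule i hi
        rw [hf] at this; simp only [h, if_true] at this
        rw [hyap, h]
        constructor
        · nlinarith [(hTx i hi).1]
        · nlinarith
      · have := hule i hi
        rw [hf] at this; simp only [h] at this
        norm_num at this
        rw [hyap, h]
        constructor
        · nlinarith
        · nlinarith [(hTx i hi).2]
    · rw [hyoff i hi]; exact hx i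
  have hzcube : ∀ i, 0 ≤ z i ∧ z i ≤ 1 := by
    intro i
    by_cases hi : i ∈ T
    · rcases hd1 i hi with h | h
      · have := hvle i hi
        rw [hg] at this; simp only [h, if_true] at this
        rw [hzap, h]
        constructor
        · nlinarith
        · nlinarith [(hTx i hi).2]
      · have := hvle i hi
        rw [hg] at this; simp only [h] at this
        norm_num at this
        rw [hzap, h]
        constructor
        · nlinarith [(hTx i hi).1]
        · nlinarith
    · rw [hzoff i hi]; exact hx i
  have hyfs : fracSet y ⊂ fracSet x := by
    constructor
    · intro m hm
      rw [mem_fracSet] at hm ⊢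
      by_cases hi : m ∈ T
      · exact hTf m hi
      · rwa [hyoff m hi] at hm
    · intro hsub
      have hm₀x : m₀ ∈ fracSet x := mem_fracSet.mpr (hTf m₀ hm₀T)
      have hm₀y : m₀ ∉ fracSet y := by
        rw [mem_fracSet]
        rcases hd1 m₀ hm₀T with h | h
        · have hval : y m₀ = 1 := by
            have hfm : f m₀ = 1 - x m₀ := by
              show (if d m₀ = 1 then 1 - x m₀ else x m₀) = 1 - x m₀
              rw [if_pos h]
            rw [hyap, h, hufm, hfm]; ring
          simp [hval]
        · have hval : y m₀ = 0 := by
            have hfm : f m₀ = x m₀ := by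
              show (if d m₀ = 1 then 1 - x m₀ else x m₀) = x m₀
              rw [if_neg (by rw [h]; norm_num)]
            rw [hyap, h, hufm, hfm]; ring
          simp [hval]
      exact hm₀y (hsub hm₀x)
  have hzfs : fracSet z ⊂ fracSet x := by
    constructor
    · intro m hm
      rw [mem_fracSet] at hm ⊢
      by_cases hi : m ∈ T
      · exact hTf m hi
      · rwa [hzoff m hi] at hm
    · intro hsub
      have hn₀x : n₀ ∈ fracSet x := mem_fracSet.mpr (hTf n₀ hn₀T)
      have hn₀z : n₀ ∉ fracSet z := by
        rw [mem_fracSet]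
        rcases hd1 n₀ hn₀T with h | h
        · have hval : z n₀ = 0 := by
            have hgm : g n₀ = x n₀ := by
              show (if d n₀ = 1 then x n₀ else 1 - x n₀) = x n₀
              rw [if_pos h]
            rw [hzap, h, hvgn, hgm]; ring
          simp [hval]
        · have hval : z n₀ = 1 := by
            have hgm : g n₀ = 1 - x n₀ := by
              show (if d n₀ = 1 then x n₀ else 1 - x n₀) = 1 - x n₀
              rw [if_neg (by rw [h]; norm_num)]
            rw [hzap, h, hvgn, hgm]; ring
          simp [hval]
      exact hn₀z (hsub hn₀x)
  have huv : 0 < u + v := by linarith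
  refine ⟨y, z, hycube, hzcube, ?_, ?_, ?_, ?_, hyfs, hzfs,
    v / (u + v), u / (u + v), by positivity, by positivity, by field_simp; ring, ?_⟩
  · rw [hy, dotp_add_smul, dotp_add_smul, h1, hdk]
  · rw [hy, dotp_add_smul, dotp_add_smul, h2, hdl]
  · rw [hz, dotp_sub_smul, dotp_sub_smul, h1, hdk]
  · rw [hz, dotp_sub_smul, dotp_sub_smul, h2, hdl]
  · funext m
    simp only [Pi.add_apply, Pi.smul_apply, smul_eq_mul, hyap, hzap]
    field_simp
    ring

lemma exists_dir {N : ℕ} (xk xj xl x : Fin N → ℝ)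
    (hxk : ∀ i, xk i = 0 ∨ xk i = 1) (hxj : ∀ i, xj i = 0 ∨ xj i = 1)
    (hxl : ∀ i, xl i = 0 ∨ xl i = 1)
    (hx : ∀ i, 0 ≤ x i ∧ x i ≤ 1)
    (h1 : dotp xk x = dotp xj x) (h2 : dotp xj x = dotp xl x)
    (hF : (fracSet x).Nonempty) :
    ∃ T : Finset (Fin N), T.Nonempty ∧ (∀ m ∈ T, x m ≠ 0 ∧ x m ≠ 1) ∧
      ∃ d : Fin N → ℝ, (∀ m ∈ T, d m = 1 ∨ d m = -1) ∧ (∀ m ∉ T, d m = 0) ∧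
        dotp xk d = dotp xj d ∧ dotp xj d = dotp xl d := by
  classical
  set a : Fin N → ℝ := fun m => xk m - xj m with ha'
  set b : Fin N → ℝ := fun m => xj m - xl m with hb'
  have orthk : ∀ d : Fin N → ℝ, (∑ m, a m * d m = 0) → dotp xk d = dotp xj d := by
    intro d hd
    have h := dotp_sub_eq xk xj d
    have h' : dotp xk d - dotp xj d = 0 := by rw [h]; exact hd
    linarith
  have orthl : ∀ d : Fin N → ℝ, (∑ m, b m * d m = 0) → dotp xj d = dotp xl d := by
    intro d hd
    have h := dotp_sub_eq xj xl d
    have h' : dotp xj d - dotp xl d = 0 := by rw [h]; exact hd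
    linarith
  have hav : ∀ m, a m = -1 ∨ a m = 0 ∨ a m = 1 := by
    intro m; rcases hxk m with h | h <;> rcases hxj m with h' | h' <;>
      norm_num [ha', h, h']
  have hbv : ∀ m, b m = -1 ∨ b m = 0 ∨ b m = 1 := by
    intro m; rcases hxj m with h | h <;> rcases hxl m with h' | h' <;>
      norm_num [hb', h, h']
  have hints_a : ∀ m, ∃ z : ℤ, a m = z := by
    intro m
    rcases hav m with h | h | h
    exacts [⟨-1, by rw [h]; norm_num⟩, ⟨0, by rw [h]; norm_num⟩, ⟨1, by rw [h]; norm_num⟩]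
  have hints_b : ∀ m, ∃ z : ℤ, b m = z := by
    intro m
    rcases hbv m with h | h | h
    exacts [⟨-1, by rw [h]; norm_num⟩, ⟨0, by rw [h]; norm_num⟩, ⟨1, by rw [h]; norm_num⟩]
  have pm : ∀ m, a m ≠ 0 → a m = 1 ∨ a m = -1 := by
    intro m hm; rcases hav m with h | h | h
    exacts [Or.inr h, absurd h hm, Or.inl h]
  have pmb : ∀ m, b m ≠ 0 → b m = 1 ∨ b m = -1 := by
    intro m hm; rcases hbv m with h | h | h
    exacts [Or.inr h, absurd h hm, Or.inl h]
  have hba3 : ∀ m, a m ≠ 0 → b m ≠ 0 → b m = -a m := by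
    intro m h h'
    have e1 : a m = xk m - xj m := rfl
    have e2 : b m = xj m - xl m := rfl
    rw [e1] at h; rw [e2] at h'; rw [e1, e2]
    rcases hxk m with hk | hk <;> rcases hxj m with hj | hj <;> rcases hxl m with hl | hl <;>
      (try rw [hk, hj] at h) <;> (try rw [hj, hl] at h') <;> rw [hk, hj, hl] <;>
      norm_num at *
  have hsuma : ∑ m, a m * x m = 0 := by
    have h := (dotp_sub_eq xk xj x).symm
    exact h.trans (by rw [h1]; ring)
  have hsumb : ∑ m, b m * x m = 0 := by
    have h := (dotp_sub_eq xj xl x).symm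
    exact h.trans (by rw [h2]; ring)
  have hfrac : ∀ m ∈ fracSet x, x m ≠ 0 ∧ x m ≠ 1 := fun m hm => mem_fracSet.mp hm
  by_cases hz : ∃ m ∈ fracSet x, a m = 0 ∧ b m = 0
  · obtain ⟨m, hm, hma, hmb⟩ := hz
    refine ⟨{m}, Finset.singleton_nonempty m, ?_,
      (fun p => if p = m then 1 else 0), ?_, ?_, ?_, ?_⟩
    · intro p hp; rw [Finset.mem_singleton] at hp; subst hp; exact hfrac _ hm
    · intro p hp; rw [Finset.mem_singleton] at hp; subst hp; simp
    · intro p hp; rw [Finset.mem_singleton] at hp; simp [hp]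
    · apply orthk; rw [sum_ind1, hma]; ring
    · apply orthl; rw [sum_ind1, hmb]; ring
  by_cases hdep : ∃ m ∈ fracSet x, ∃ m' ∈ fracSet x, m ≠ m' ∧
      ∃ s : ℝ, (s = 1 ∨ s = -1) ∧ a m' = s * a m ∧ b m' = s * b m
  · obtain ⟨m, hm, m', hm', hne, s, hs, hsa, hsb⟩ := hdep
    refine ⟨{m, m'}, ⟨m, by simp⟩, ?_,
      (fun p => if p = m then 1 else if p = m' then -s else 0), ?_, ?_, ?_, ?_⟩
    · intro p hp
      rcases Finset.mem_insert.mp hp with h | h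
      · subst h; exact hfrac _ hm
      · rw [Finset.mem_singleton] at h; subst h; exact hfrac _ hm'
    · intro p hp
      rcases Finset.mem_insert.mp hp with h | h
      · subst h; simp
      · rw [Finset.mem_singleton] at h; subst h
        rcases hs with h | h <;> simp [Ne.symm hne, h]
    · intro p hp
      simp only [Finset.mem_insert, Finset.mem_singleton, not_or] at hp
      simp [hp.1, hp.2]
    · apply orthk
      rw [sum_ind2 a m m' hne 1 (-s), hsa]
      rcases hs with h | h <;> rw [h] <;> ring
    · apply orthl
      rw [sum_ind2 b m m' hne 1 (-s), hsb]
      rcases hs with h | h <;> rw [h] <;> ring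
  by_cases h3 : ∃ m₁ ∈ fracSet x, ∃ m₂ ∈ fracSet x, ∃ m₃ ∈ fracSet x,
      (a m₁ ≠ 0 ∧ b m₁ = 0) ∧ (a m₂ = 0 ∧ b m₂ ≠ 0) ∧ (a m₃ ≠ 0 ∧ b m₃ ≠ 0)
  · obtain ⟨m₁, hm1, m₂, hm2, m₃, hm3, ⟨ha1, hb1⟩, ⟨ha2, hb2⟩, ⟨ha3, hb3⟩⟩ := h3
    have h12 : m₁ ≠ m₂ := by rintro rfl; exact ha1 ha2
    have h13 : m₁ ≠ m₃ := by rintro rfl; exact hb3 hb1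
    have h23 : m₂ ≠ m₃ := by rintro rfl; exact ha3 ha2
    obtain sa1 := pm m₁ ha1
    obtain sa3 := pm m₃ ha3
    obtain sb2 := pmb m₂ hb2
    obtain sb3 := pmb m₃ hb3
    refine ⟨{m₁, m₂, m₃}, ⟨m₁, by simp⟩, ?_,
      (fun p => if p = m₁ then -(a m₃ * a m₁) else if p = m₂ then -(b m₃ * b m₂)
        else if p = m₃ then 1 else 0), ?_, ?_, ?_, ?_⟩
    · intro p hp
      simp only [Finset.mem_insert, Finset.mem_singleton] at hp
      rcases hp with h | h | h <;> subst h
      exacts [hfrac _ hm1, hfrac _ hm2, hfrac _ hm3]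
    · intro p hp
      simp only [Finset.mem_insert, Finset.mem_singleton] at hp
      rcases hp with h | h | h <;> subst h
      · rcases sa1 with h | h <;> rcases sa3 with h' | h' <;> simp [h, h']
      · rcases sb2 with h | h <;> rcases sb3 with h' | h' <;>
          simp [h, h', h12.symm]
      · simp [h13.symm, h23.symm]
    · intro p hp
      simp only [Finset.mem_insert, Finset.mem_singleton, not_or] at hp
      simp [hp.1, hp.2.1, hp.2.2]
    · apply orthk
      rw [sum_ind3 a m₁ m₂ m₃ h12 h13 h23, ha2]
      rcases sa1 with h | h <;> rw [h] <;> ring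
    · apply orthl
      rw [sum_ind3 b m₁ m₂ m₃ h12 h13 h23, hb1]
      rcases sb2 with h | h <;> rw [h] <;> ring
  -- final case: derive a contradiction from integrality
  exfalso
  have hcne : ∀ m ∈ fracSet x, ¬(a m = 0 ∧ b m = 0) := fun m hm h => hz ⟨m, hm, h⟩
  have hpair : ∀ m ∈ fracSet x, ∀ m' ∈ fracSet x, m ≠ m' → ∀ s : ℝ,
      (s = 1 ∨ s = -1) → a m' = s * a m → b m' = s * b m → False :=
    fun m hm m' hm' hne s hs hsa hsb => hdep ⟨m, hm, m', hm', hne, s, hs, hsa, hsb⟩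
  have htri : ∀ m ∈ fracSet x,
      (a m ≠ 0 ∧ b m = 0) ∨ (a m = 0 ∧ b m ≠ 0) ∨ (a m ≠ 0 ∧ b m ≠ 0) := by
    intro m hm
    by_cases h : a m = 0 <;> by_cases h' : b m = 0
    · exact absurd ⟨h, h'⟩ (hcne m hm)
    · exact Or.inr (Or.inl ⟨h, h'⟩)
    · exact Or.inl ⟨h, h'⟩
    · exact Or.inr (Or.inr ⟨h, h'⟩)
  have no_two_c1 : ∀ m ∈ fracSet x, ∀ m' ∈ fracSet x, m ≠ m' → b m = 0 → b m' = 0 → False := by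
    intro m hm m' hm' hne hb hb'
    have ham : a m ≠ 0 := fun h => hcne m hm ⟨h, hb⟩
    have ham' : a m' ≠ 0 := fun h => hcne m' hm' ⟨h, hb'⟩
    apply hpair m hm m' hm' hne (a m' * a m) ?_ ?_ ?_
    · rcases pm m ham with h | h <;> rcases pm m' ham' with h' | h' <;> rw [h, h'] <;> norm_num
    · rcases pm m ham with h | h <;> rcases pm m' ham' with h' | h' <;> rw [h, h'] <;> norm_num
    · rw [hb, hb']; ring
  have no_two_c2 : ∀ m ∈ fracSet x, ∀ m' ∈ fracSet x, m ≠ m' → a m = 0 → a m' = 0 → False := by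
    intro m hm m' hm' hne ha ha2'
    have hbm : b m ≠ 0 := fun h => hcne m hm ⟨ha, h⟩
    have hbm' : b m' ≠ 0 := fun h => hcne m' hm' ⟨ha2', h⟩
    apply hpair m hm m' hm' hne (b m' * b m) ?_ ?_ ?_
    · rcases pmb m hbm with h | h <;> rcases pmb m' hbm' with h' | h' <;> rw [h, h'] <;> norm_num
    · rw [ha, ha2']; ring
    · rcases pmb m hbm with h | h <;> rcases pmb m' hbm' with h' | h' <;> rw [h, h'] <;> norm_num
  have no_two_c3 : ∀ m ∈ fracSet x, ∀ m' ∈ fracSet x, m ≠ m' →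
      a m ≠ 0 → b m ≠ 0 → a m' ≠ 0 → b m' ≠ 0 → False := by
    intro m hm m' hm' hne ham hbm ham' hbm'
    apply hpair m hm m' hm' hne (a m' * a m) ?_ ?_ ?_
    · rcases pm m ham with h | h <;> rcases pm m' ham' with h' | h' <;> rw [h, h'] <;> norm_num
    · rcases pm m ham with h | h <;> rcases pm m' ham' with h' | h' <;> rw [h, h'] <;> norm_num
    · rw [hba3 m ham hbm, hba3 m' ham' hbm']
      rcases pm m ham with h | h <;> rcases pm m' ham' with h' | h' <;> rw [h, h'] <;> norm_num
  obtain ⟨i, hiF⟩ := hF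
  rcases htri i hiF with ⟨hai, hbi⟩ | ⟨hai, hbi⟩ | ⟨hai, hbi⟩
  · -- i in class 1
    by_cases hA : ∀ m, m ≠ i → (x m ≠ 0 ∧ x m ≠ 1) → a m = 0
    · exact row_contra x a hx hints_a hsuma i (hfrac i hiF) (pm i hai) hA
    · push_neg at hA
      obtain ⟨j, hji, hjf, haj⟩ := hA
      have hjF : j ∈ fracSet x := mem_fracSet.mpr hjf
      rcases htri j hjF with ⟨haj', hbj⟩ | ⟨haj', hbj⟩ | ⟨haj', hbj⟩
      · exact no_two_c1 i hiF j hjF (Ne.symm hji) hbi hbj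
      · exact haj haj'
      · apply row_contra x b hx hints_b hsumb j hjf (pmb j hbj)
        intro m hmj hmf
        have hmF := mem_fracSet.mpr hmf
        by_contra hbm
        rcases htri m hmF with ⟨ham, hbm'⟩ | ⟨ham, hbm'⟩ | ⟨ham, hbm'⟩
        · exact hbm hbm'
        · exact h3 ⟨i, hiF, m, hmF, j, hjF, ⟨hai, hbi⟩, ⟨ham, hbm'⟩, ⟨haj', hbj⟩⟩
        · exact no_two_c3 m hmF j hjF hmj ham hbm' haj' hbj
  · -- i in class 2
    by_cases hA : ∀ m, m ≠ i → (x m ≠ 0 ∧ x m ≠ 1) → b m = 0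
    · exact row_contra x b hx hints_b hsumb i (hfrac i hiF) (pmb i hbi) hA
    · push_neg at hA
      obtain ⟨j, hji, hjf, hbjne⟩ := hA
      have hjF : j ∈ fracSet x := mem_fracSet.mpr hjf
      rcases htri j hjF with ⟨haj', hbj'⟩ | ⟨haj', hbj'⟩ | ⟨haj', hbj'⟩
      · exact hbjne hbj'
      · exact no_two_c2 i hiF j hjF (Ne.symm hji) hai haj'
      · apply row_contra x a hx hints_a hsuma j hjf (pm j haj')
        intro m hmj hmf
        have hmF := mem_fracSet.mpr hmf
        by_contra ham
        rcases htri m hmF with ⟨ham', hbm'⟩ | ⟨ham', hbm'⟩ | ⟨ham', hbm'⟩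
        · exact h3 ⟨m, hmF, i, hiF, j, hjF, ⟨ham', hbm'⟩, ⟨hai, hbi⟩, ⟨haj', hbj'⟩⟩
        · exact ham ham'
        · exact no_two_c3 m hmF j hjF hmj ham' hbm' haj' hbj'
  · -- i in class 3
    by_cases hA : ∀ m, m ≠ i → (x m ≠ 0 ∧ x m ≠ 1) → a m = 0
    · exact row_contra x a hx hints_a hsuma i (hfrac i hiF) (pm i hai) hA
    · push_neg at hA
      obtain ⟨j, hji, hjf, haj⟩ := hA
      have hjF : j ∈ fracSet x := mem_fracSet.mpr hjf
      rcases htri j hjF with ⟨haj', hbj'⟩ | ⟨haj', hbj'⟩ | ⟨haj', hbj'⟩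
      · apply row_contra x b hx hints_b hsumb i (hfrac i hiF) (pmb i hbi)
        intro m hmi hmf
        have hmF := mem_fracSet.mpr hmf
        by_contra hbm
        rcases htri m hmF with ⟨ham', hbm'⟩ | ⟨ham', hbm'⟩ | ⟨ham', hbm'⟩
        · exact hbm hbm'
        · exact h3 ⟨j, hjF, m, hmF, i, hiF, ⟨haj', hbj'⟩, ⟨ham', hbm'⟩, ⟨hai, hbi⟩⟩
        · exact no_two_c3 m hmF i hiF hmi ham' hbm' hai hbi
      · exact haj haj'
      · exact no_two_c3 i hiF j hjF (Ne.symm hji) hai hbi haj' hbj'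

theorem stmt_3 {N : ℕ} (xk xj xl : Fin N → ℝ)
    (hxk : xk ∈ cubeVerts N) (hxj : xj ∈ cubeVerts N) (hxl : xl ∈ cubeVerts N) :
    {x ∈ unitCube N | dotp xk x = dotp xj x ∧ dotp xj x = dotp xl x} =
      convexHull ℝ {h ∈ cubeVerts N | dotp xk h = dotp xj h ∧ dotp xj h = dotp xl h} := by
  have hxk' : ∀ i, xk i = 0 ∨ xk i = 1 := hxk
  have hxj' : ∀ i, xj i = 0 ∨ xj i = 1 := hxj
  have hxl' : ∀ i, xl i = 0 ∨ xl i = 1 := hxl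
  apply Set.Subset.antisymm
  · intro x hx
    obtain ⟨hxc, hx1, hx2⟩ := hx
    have hxc' : ∀ i, 0 ≤ x i ∧ x i ≤ 1 := fun i => Set.mem_Icc.mp (hxc i)
    suffices H : ∀ n : ℕ, ∀ y : Fin N → ℝ, (∀ i, 0 ≤ y i ∧ y i ≤ 1) →
        dotp xk y = dotp xj y → dotp xj y = dotp xl y → (fracSet y).card ≤ n →
        y ∈ convexHull ℝ
          {h ∈ cubeVerts N | dotp xk h = dotp xj h ∧ dotp xj h = dotp xl h} by
      exact H (fracSet x).card x hxc' hx1 hx2 le_rfl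
    intro n
    induction n with
    | zero =>
      intro y hy h1 h2 hcard
      have hempty : fracSet y = ∅ := Finset.card_eq_zero.mp (Nat.le_zero.mp hcard)
      have hvert : y ∈ cubeVerts N := by
        intro i
        by_contra hcon
        push_neg at hcon
        have hmem : i ∈ fracSet y := mem_fracSet.mpr hcon
        rw [hempty] at hmem
        exact absurd hmem (Finset.notMem_empty i)
      exact subset_convexHull ℝ _ ⟨hvert, h1, h2⟩
    | succ n ih =>
      intro y hy h1 h2 hcard
      by_cases hF : (fracSet y).Nonempty
      · obtain ⟨T, hT, hTf', d, hd1, hd0, hdk, hdl⟩ :=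
          exists_dir xk xj xl y hxk' hxj' hxl' hy h1 h2 hF
        obtain ⟨y₁, y₂, hc1, hc2, e1, e2, e3, e4, hs1, hs2, p, q, hp, hq, hpq, hxe⟩ :=
          step_lemma xk xj xl y hy h1 h2 T hT d hd1 hd0 hTf' hdk hdl
        have hy₁ := ih y₁ hc1 e1 e2 (by have := Finset.card_lt_card hs1; omega)
        have hy₂ := ih y₂ hc2 e3 e4 (by have := Finset.card_lt_card hs2; omega)
        rw [hxe]
        exact (convex_convexHull ℝ _) hy₁ hy₂ hp hq hpq
      · rw [Finset.not_nonempty_iff_eq_empty] at hF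
        have hvert : y ∈ cubeVerts N := by
          intro i
          by_contra hcon
          push_neg at hcon
          have hmem : i ∈ fracSet y := mem_fracSet.mpr hcon
          rw [hF] at hmem
          exact absurd hmem (Finset.notMem_empty i)
        exact subset_convexHull ℝ _ ⟨hvert, h1, h2⟩
  · apply convexHull_min
    · rintro h ⟨hv, e1, e2⟩
      refine ⟨?_, e1, e2⟩
      intro i
      rcases hv i with h' | h' <;> rw [Set.mem_Icc, h'] <;> norm_num
    · intro u hu v hv p q hp hq hpq
      obtain ⟨huc, hu1, hu2⟩ := hu
      obtain ⟨hvc, hv1, hv2⟩ := hv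
      refine ⟨?_, ?_, ?_⟩
      · intro i
        have hui := Set.mem_Icc.mp (huc i)
        have hvi := Set.mem_Icc.mp (hvc i)
        have happ : (p • u + q • v) i = p * u i + q * v i := rfl
        rw [Set.mem_Icc, happ]
        constructor
        · nlinarith [hui.1, hvi.1]
        · nlinarith [hui.2, hvi.2]
      · rw [dotp_combo, dotp_combo, hu1, hv1]
      · rw [dotp_combo, dotp_combo, hu2, hv2]
end

section
/- Let H = [0,1]^N and H_V = {0,1}^N. For any three vertices x_k, x_j, x_l ∈ H_V, the set B_kj^l = {x ∈ H : x_k·x = x_j·x and x_j·x ≥ x_l·x} equals the convex hull of H_kj^l = {h ∈ H_V : x_k·h = x_j·h and x_j·h ≥ x_l·h}. -/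
open scoped Classical

lemma dotp_add {N : ℕ} (a x y : Fin N → ℝ) : dotp a (x + y) = dotp a x + dotp a y := by
  simp [dotp, mul_add, Finset.sum_add_distrib]

lemma dotp_smul {N : ℕ} (a : Fin N → ℝ) (r : ℝ) (x : Fin N → ℝ) :
    dotp a (r • x) = r * dotp a x := by
  simp only [dotp, Finset.mul_sum]
  exact Finset.sum_congr rfl fun i _ => by simp; ring

lemma dotp_sub {N : ℕ} (a x y : Fin N → ℝ) : dotp a (x - y) = dotp a x - dotp a y := by
  simp [dotp, mul_sub, Finset.sum_sub_distrib]

lemma dotp_single {N : ℕ} (a : Fin N → ℝ) (i : Fin N) (r : ℝ) :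
    dotp a (Pi.single i r) = a i * r := by
  unfold dotp
  rw [Finset.sum_eq_single i]
  · simp
  · intro b _ hb
    simp [Pi.single_eq_of_ne hb]
  · simp

lemma dotp_cont {N : ℕ} (a : Fin N → ℝ) : Continuous (fun x : Fin N → ℝ => dotp a x) := by
  unfold dotp
  exact continuous_finset_sum _ fun i _ => continuous_const.mul (continuous_apply i)

lemma exists_int_sum {N : ℕ} (s : Finset (Fin N)) (f : Fin N → ℝ)
    (h : ∀ i ∈ s, ∃ m : ℤ, f i = m) : ∃ m : ℤ, ∑ i ∈ s, f i = (m : ℝ) := by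
  classical
  induction s using Finset.induction with
  | empty => exact ⟨0, by simp⟩
  | insert _ _ hni ih =>
    obtain ⟨m, hm⟩ := ih (fun i hi => h i (Finset.mem_insert_of_mem hi))
    obtain ⟨m0, hm0⟩ := h _ (Finset.mem_insert_self _ _)
    exact ⟨m0 + m, by rw [Finset.sum_insert hni, hm, hm0]; push_cast; ring⟩

lemma frac_pair {N : ℕ} (c x : Fin N → ℝ)
    (hcint : ∀ i, c i = -1 ∨ c i = 0 ∨ c i = 1)
    (hcube : ∀ i, 0 ≤ x i ∧ x i ≤ 1)
    (hcx : dotp c x = 0) (i0 : Fin N) (h0 : 0 < x i0) (h1 : x i0 < 1) (hc0 : c i0 ≠ 0) :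
    ∃ j, j ≠ i0 ∧ c j ≠ 0 ∧ 0 < x j ∧ x j < 1 := by
  by_contra h
  push_neg at h
  have hterm : ∀ j ∈ Finset.univ.erase i0, ∃ m : ℤ, c j * x j = (m : ℝ) := by
    intro j hj
    have hj' : j ≠ i0 := (Finset.mem_erase.1 hj).1
    by_cases hcj : c j = 0
    · exact ⟨0, by simp [hcj]⟩
    · by_cases hxj : 0 < x j
      · have hx1 : x j = 1 := le_antisymm (hcube j).2 (h j hj' hcj hxj)
        rcases hcint j with hv | hv | hv
        · exact ⟨-1, by rw [hx1, hv]; push_cast; ring⟩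
        · exact absurd hv hcj
        · exact ⟨1, by rw [hx1, hv]; push_cast; ring⟩
      · have hx0 : x j = 0 := le_antisymm (not_lt.1 hxj) (hcube j).1
        exact ⟨0, by simp [hx0]⟩
  obtain ⟨m, hm⟩ := exists_int_sum _ _ hterm
  have hsplit : c i0 * x i0 + ∑ j ∈ Finset.univ.erase i0, c j * x j = dotp c x := by
    unfold dotp; exact Finset.add_sum_erase _ (fun j => c j * x j) (Finset.mem_univ i0)
  rw [hcx, hm] at hsplit
  have hxm : ∃ m' : ℤ, x i0 = (m' : ℝ) := by
    rcases hcint i0 with hv | hv | hv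
    · exact ⟨m, by rw [hv] at hsplit; push_cast; linarith⟩
    · exact absurd hv hc0
    · exact ⟨-m, by rw [hv] at hsplit; push_cast; linarith⟩
  obtain ⟨m', hm'⟩ := hxm
  rw [hm'] at h0 h1
  have h0' : (0 : ℤ) < m' := by exact_mod_cast h0
  have h1' : m' < (1 : ℤ) := by exact_mod_cast h1
  omega

section Dir
variable {N : ℕ}

/-- pair direction -/
noncomputable def pv (c : Fin N → ℝ) (i j : Fin N) : Fin N → ℝ :=
  c j • (Pi.single i 1 : Fin N → ℝ) - c i • (Pi.single j 1 : Fin N → ℝ)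

lemma dotp_pv (a c : Fin N → ℝ) (i j : Fin N) :
    dotp a (pv c i j) = c j * a i - c i * a j := by
  rw [pv, dotp_sub, dotp_smul, dotp_smul, dotp_single, dotp_single]; ring

lemma pv_apply_self {c : Fin N → ℝ} {i j : Fin N} (hij : i ≠ j) : pv c i j i = c j := by
  simp [pv, Pi.single_eq_of_ne hij]

lemma pv_supp {c : Fin N → ℝ} {i j m : Fin N} (hmi : m ≠ i) (hmj : m ≠ j) : pv c i j m = 0 := by
  simp [pv, Pi.single_eq_of_ne hmi, Pi.single_eq_of_ne hmj]

/-- triple direction -/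
noncomputable def tv (c d : Fin N → ℝ) (a b r : Fin N) : Fin N → ℝ :=
  (-(c a * c r)) • (Pi.single a 1 : Fin N → ℝ) +
    ((-(d b * d r)) • (Pi.single b 1 : Fin N → ℝ) + (Pi.single r 1 : Fin N → ℝ))

lemma dotp_tv (e c d : Fin N → ℝ) (a b r : Fin N) :
    dotp e (tv c d a b r) = -(c a * c r) * e a + (-(d b * d r) * e b + e r) := by
  rw [tv, dotp_add, dotp_add, dotp_smul, dotp_smul, dotp_single, dotp_single, dotp_single]; ring

lemma tv_apply_r {c d : Fin N → ℝ} {a b r : Fin N} (har : a ≠ r) (hbr : b ≠ r) :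
    tv c d a b r r = 1 := by
  simp [tv, Pi.single_eq_of_ne (Ne.symm har), Pi.single_eq_of_ne (Ne.symm hbr)]

lemma tv_supp {c d : Fin N → ℝ} {a b r m : Fin N} (hma : m ≠ a) (hmb : m ≠ b) (hmr : m ≠ r) :
    tv c d a b r m = 0 := by
  simp [tv, Pi.single_eq_of_ne hma, Pi.single_eq_of_ne hmb, Pi.single_eq_of_ne hmr]

lemma sq1 {t : ℝ} (ht : t = -1 ∨ t = 0 ∨ t = 1) (h0 : t ≠ 0) : t * t = 1 := by
  rcases ht with h | h | h <;> simp_all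

lemma dneg {a b : ℝ} (ha : a = -1 ∨ a = 0 ∨ a = 1) (hb : b = -1 ∨ b = 0 ∨ b = 1)
    (hab : a * b ≤ 0) (ha0 : a ≠ 0) (hb0 : b ≠ 0) : b = -a := by
  rcases ha with h | h | h <;> rcases hb with g | g | g <;> simp_all <;> linarith

lemma exists_dir0 (c d x : Fin N → ℝ)
    (hcint : ∀ i, c i = -1 ∨ c i = 0 ∨ c i = 1)
    (hdint : ∀ i, d i = -1 ∨ d i = 0 ∨ d i = 1)
    (hcd : ∀ i, c i * d i ≤ 0)
    (hcube : ∀ i, 0 ≤ x i ∧ x i ≤ 1)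
    (hcx : dotp c x = 0) (hdx : dotp d x = 0)
    (i0 : Fin N) (h0 : 0 < x i0) (h1 : x i0 < 1) (hci0 : c i0 ≠ 0) :
    ∃ v : Fin N → ℝ, v ≠ 0 ∧ (∀ i, v i ≠ 0 → 0 < x i ∧ x i < 1) ∧
      dotp c v = 0 ∧ dotp d v = 0 := by
  have hd2 : ∀ m, c m ≠ 0 → d m ≠ 0 → d m = -c m := fun m hc hd =>
    dneg (hcint m) (hdint m) (hcd m) hc hd
  -- generic pair builder
  have mkpair : ∀ i j : Fin N, i ≠ j → c j ≠ 0 → (0 < x i ∧ x i < 1) → (0 < x j ∧ x j < 1) →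
      d i * c j = d j * c i →
      ∃ v : Fin N → ℝ, v ≠ 0 ∧ (∀ m, v m ≠ 0 → 0 < x m ∧ x m < 1) ∧
        dotp c v = 0 ∧ dotp d v = 0 := by
    intro i j hij hcj hfi hfj hdet
    refine ⟨pv c i j, ?_, ?_, ?_, ?_⟩
    · intro hv
      have := congrFun hv i
      rw [pv_apply_self hij] at this
      exact hcj this
    · intro m hm
      by_cases hmi : m = i
      · exact hmi ▸ hfi
      · by_cases hmj : m = j
        · exact hmj ▸ hfj
        · exact absurd (pv_supp hmi hmj) hm
    · rw [dotp_pv]; ring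
    · rw [dotp_pv]; linarith
  -- generic triple builder
  have mktriple : ∀ a b r : Fin N, a ≠ b → a ≠ r → b ≠ r →
      c a ≠ 0 → c b = 0 → d a = 0 → d b ≠ 0 →
      (0 < x a ∧ x a < 1) → (0 < x b ∧ x b < 1) → (0 < x r ∧ x r < 1) →
      ∃ v : Fin N → ℝ, v ≠ 0 ∧ (∀ m, v m ≠ 0 → 0 < x m ∧ x m < 1) ∧
        dotp c v = 0 ∧ dotp d v = 0 := by
    intro a b r hab har hbr hca hcb hda hdb hfa hfb hfr
    have hca2 : c a * c a = 1 := sq1 (hcint a) hca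
    have hdb2 : d b * d b = 1 := sq1 (hdint b) hdb
    refine ⟨tv c d a b r, ?_, ?_, ?_, ?_⟩
    · intro hv
      have := congrFun hv r
      rw [tv_apply_r har hbr] at this
      simp at this
    · intro m hm
      by_cases hma : m = a
      · exact hma ▸ hfa
      · by_cases hmb : m = b
        · exact hmb ▸ hfb
        · by_cases hmr : m = r
          · exact hmr ▸ hfr
          · exact absurd (tv_supp hma hmb hmr) hm
    · rw [dotp_tv, hcb]; linear_combination (-(c r)) * hca2
    · rw [dotp_tv, hda]; linear_combination (-(d r)) * hdb2
  obtain ⟨j, hji, hcj, hfj⟩ := frac_pair c x hcint hcube hcx i0 h0 h1 hci0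
  by_cases hdet : d i0 * c j = d j * c i0
  · exact mkpair i0 j (Ne.symm hji) hcj ⟨h0, h1⟩ hfj hdet
  · by_cases hdi0 : d i0 = 0
    · have hdj : d j ≠ 0 := by
        intro hdj
        exact hdet (by rw [hdi0, hdj]; ring)
      obtain ⟨k, hkj, hdk, hfk⟩ := frac_pair d x hdint hcube hdx j hfj.1 hfj.2 hdj
      by_cases hck : c k = 0
      · -- triple a = i0, b = k, r = j
        have hik : i0 ≠ k := fun h => hci0 (h ▸ hck)
        exact mktriple i0 k j hik (Ne.symm hji) hkj hci0 hck hdi0 hdk ⟨h0, h1⟩ hfk hfj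
      · exact mkpair j k (Ne.symm hkj) hck hfj hfk
          (by rw [hd2 j hcj hdj, hd2 k hck hdk]; ring)
    · have hdj : d j = 0 := by
        by_contra hdj
        exact hdet (by rw [hd2 i0 hci0 hdi0, hd2 j hcj hdj]; ring)
      obtain ⟨k, hki, hdk, hfk⟩ := frac_pair d x hdint hcube hdx i0 h0 h1 hdi0
      by_cases hck : c k = 0
      · -- triple a = j, b = k, r = i0
        have hjk : j ≠ k := fun h => hcj (h ▸ hck)
        exact mktriple j k i0 hjk hji hki hcj hck hdj hdk hfj hfk ⟨h0, h1⟩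
      · exact mkpair i0 k (Ne.symm hki) hck ⟨h0, h1⟩ hfk
          (by rw [hd2 i0 hci0 hdi0, hd2 k hck hdk]; ring)

lemma exists_dir_s4 (c d x : Fin N → ℝ)
    (hcint : ∀ i, c i = -1 ∨ c i = 0 ∨ c i = 1)
    (hdint : ∀ i, d i = -1 ∨ d i = 0 ∨ d i = 1)
    (hcd : ∀ i, c i * d i ≤ 0)
    (hcube : ∀ i, 0 ≤ x i ∧ x i ≤ 1)
    (hcx : dotp c x = 0) (hdx : 0 ≤ dotp d x)
    (i0 : Fin N) (h0 : 0 < x i0) (h1 : x i0 < 1) :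
    ∃ v : Fin N → ℝ, v ≠ 0 ∧ (∀ i, v i ≠ 0 → 0 < x i ∧ x i < 1) ∧
      dotp c v = 0 ∧ (dotp d v = 0 ∨ 0 < dotp d x) := by
  by_cases hpos : 0 < dotp d x
  · by_cases hc0 : c i0 = 0
    · refine ⟨Pi.single i0 1, ?_, ?_, ?_, Or.inr hpos⟩
      · intro hv
        have := congrFun hv i0
        simp at this
      · intro m hm
        by_cases hmi : m = i0
        · exact hmi ▸ ⟨h0, h1⟩
        · exact absurd (Pi.single_eq_of_ne hmi 1) hm
      · rw [dotp_single, hc0]; ring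
    · obtain ⟨j, hji, hcj, hfj⟩ := frac_pair c x hcint hcube hcx i0 h0 h1 hc0
      refine ⟨pv c i0 j, ?_, ?_, ?_, Or.inr hpos⟩
      · intro hv
        have := congrFun hv i0
        rw [pv_apply_self (Ne.symm hji)] at this
        exact hcj this
      · intro m hm
        by_cases hmi : m = i0
        · exact hmi ▸ ⟨h0, h1⟩
        · by_cases hmj : m = j
          · exact hmj ▸ hfj
          · exact absurd (pv_supp hmi hmj) hm
      · rw [dotp_pv]; ring
  · have hdx0 : dotp d x = 0 := le_antisymm (not_lt.1 hpos) hdx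
    by_cases hc0 : c i0 = 0
    · by_cases hd0 : d i0 = 0
      · refine ⟨Pi.single i0 1, ?_, ?_, ?_, Or.inl ?_⟩
        · intro hv
          have := congrFun hv i0
          simp at this
        · intro m hm
          by_cases hmi : m = i0
          · exact hmi ▸ ⟨h0, h1⟩
          · exact absurd (Pi.single_eq_of_ne hmi 1) hm
        · rw [dotp_single, hc0]; ring
        · rw [dotp_single, hd0]; ring
      · -- swap roles of c and d
        obtain ⟨v, hv0, hsupp, hdv, hcv⟩ := exists_dir0 d c x hdint hcint
          (fun i => by have := hcd i; linarith [mul_comm (c i) (d i)])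
          hcube hdx0 hcx i0 h0 h1 hd0
        exact ⟨v, hv0, hsupp, hcv, Or.inl hdv⟩
    · obtain ⟨v, hv0, hsupp, hcv, hdv⟩ := exists_dir0 c d x hcint hdint hcd
        hcube hcx hdx0 i0 h0 h1 hc0
      exact ⟨v, hv0, hsupp, hcv, Or.inl hdv⟩

end Dir

lemma perturb {N : ℕ} (c d x v : Fin N → ℝ)
    (hcube : ∀ i, 0 ≤ x i ∧ x i ≤ 1)
    (hcx : dotp c x = 0) (hdx : 0 ≤ dotp d x)
    (hv0 : v ≠ 0) (hsupp : ∀ i, v i ≠ 0 → 0 < x i ∧ x i < 1)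
    (hcv : dotp c v = 0) (hdisj : dotp d v = 0 ∨ 0 < dotp d x) :
    ∃ ε : ℝ, 0 < ε ∧ ∀ s : ℝ, |s| ≤ ε →
      (∀ i, 0 ≤ (x + s • v) i ∧ (x + s • v) i ≤ 1) ∧
      dotp c (x + s • v) = 0 ∧ 0 ≤ dotp d (x + s • v) := by
  obtain ⟨i0, hi0⟩ := Function.ne_iff.mp hv0
  have hne : (Finset.univ : Finset (Fin N)).Nonempty := ⟨i0, Finset.mem_univ i0⟩
  set g : Fin N → ℝ := fun i => if v i = 0 then 1 else min (x i) (1 - x i) / |v i| with hg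
  set ε₁ : ℝ := Finset.univ.inf' hne g with hε₁
  have hε₁pos : 0 < ε₁ := by
    rw [hε₁, Finset.lt_inf'_iff]
    intro i _
    rw [hg]
    by_cases hvi : v i = 0
    · simp [hvi]
    · have hf := hsupp i hvi
      simp only [hvi, if_false]
      exact div_pos (lt_min hf.1 (by linarith [hf.2])) (abs_pos.2 hvi)
  obtain ⟨ε₂, hε₂pos, hε₂⟩ : ∃ e : ℝ, 0 < e ∧
      ∀ s : ℝ, |s| ≤ e → 0 ≤ dotp d x + s * dotp d v := by
    rcases eq_or_ne (dotp d v) 0 with hdv | hdv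
    · exact ⟨1, one_pos, fun s _ => by rw [hdv]; simpa using hdx⟩
    · have hpos : 0 < dotp d x := hdisj.resolve_left hdv
      refine ⟨dotp d x / |dotp d v|, div_pos hpos (abs_pos.2 hdv), fun s hs => ?_⟩
      have hb : |s * dotp d v| ≤ dotp d x := by
        rw [abs_mul]
        calc |s| * |dotp d v| ≤ (dotp d x / |dotp d v|) * |dotp d v| :=
              mul_le_mul_of_nonneg_right hs (abs_nonneg _)
          _ = dotp d x := div_mul_cancel₀ _ (ne_of_gt (abs_pos.2 hdv))
      have := neg_abs_le (s * dotp d v)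
      linarith
  refine ⟨min ε₁ ε₂, lt_min hε₁pos hε₂pos, fun s hs => ?_⟩
  have hs₁ : |s| ≤ ε₁ := le_trans hs (min_le_left _ _)
  have hs₂ : |s| ≤ ε₂ := le_trans hs (min_le_right _ _)
  refine ⟨fun i => ?_, ?_, ?_⟩
  · simp only [Pi.add_apply, Pi.smul_apply, smul_eq_mul]
    by_cases hvi : v i = 0
    · simpa [hvi] using hcube i
    · have hf := hsupp i hvi
      have hgi : ε₁ ≤ min (x i) (1 - x i) / |v i| := by
        have h5 : g i = min (x i) (1 - x i) / |v i| := by rw [hg]; simp [hvi]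
        have h6 := Finset.inf'_le g (Finset.mem_univ i)
        rw [h5] at h6
        rw [hε₁]
        exact h6
      have hb : |s| * |v i| ≤ min (x i) (1 - x i) := by
        rw [← le_div_iff₀ (abs_pos.2 hvi)]
        exact le_trans hs₁ hgi
      have hb1 : |s * v i| ≤ x i := by
        rw [abs_mul]; exact le_trans hb (min_le_left _ _)
      have hb2 : |s * v i| ≤ 1 - x i := by
        rw [abs_mul]; exact le_trans hb (min_le_right _ _)
      have h3 := neg_abs_le (s * v i)
      have h4 := le_abs_self (s * v i)
      constructor <;> linarith
  · rw [dotp_add, dotp_smul, hcx, hcv]; ring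
  · rw [dotp_add, dotp_smul]
    exact hε₂ s hs₂

theorem stmt_4 {N : ℕ} (xk xj xl : Fin N → ℝ)
    (hxk : xk ∈ cubeVerts N) (hxj : xj ∈ cubeVerts N) (hxl : xl ∈ cubeVerts N) :
    {x ∈ unitCube N | dotp xk x = dotp xj x ∧ dotp xj x ≥ dotp xl x} =
      convexHull ℝ {h ∈ cubeVerts N | dotp xk h = dotp xj h ∧ dotp xj h ≥ dotp xl h} := by
  classical
  set c : Fin N → ℝ := fun i => xk i - xj i with hc
  set d : Fin N → ℝ := fun i => xj i - xl i with hd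
  have hcint : ∀ i, c i = -1 ∨ c i = 0 ∨ c i = 1 := by
    intro i
    rcases hxk i with h | h <;> rcases hxj i with g | g <;> rw [hc] <;> simp [h, g]
  have hdint : ∀ i, d i = -1 ∨ d i = 0 ∨ d i = 1 := by
    intro i
    rcases hxj i with h | h <;> rcases hxl i with g | g <;> rw [hd] <;> simp [h, g]
  have hcd : ∀ i, c i * d i ≤ 0 := by
    intro i
    rcases hxk i with h | h <;> rcases hxj i with g | g <;> rcases hxl i with f | f <;>
      rw [hc, hd] <;> simp [h, g, f] <;> norm_num
  have hdotc : ∀ x : Fin N → ℝ, dotp c x = dotp xk x - dotp xj x := by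
    intro x
    unfold dotp
    rw [← Finset.sum_sub_distrib]
    exact Finset.sum_congr rfl fun i _ => by rw [hc]; ring
  have hdotd : ∀ x : Fin N → ℝ, dotp d x = dotp xj x - dotp xl x := by
    intro x
    unfold dotp
    rw [← Finset.sum_sub_distrib]
    exact Finset.sum_congr rfl fun i _ => by rw [hd]; ring
  have hiff : ∀ x : Fin N → ℝ,
      (dotp xk x = dotp xj x ∧ dotp xj x ≥ dotp xl x) ↔ (dotp c x = 0 ∧ 0 ≤ dotp d x) := by
    intro x
    rw [hdotc, hdotd]
    constructor
    · rintro ⟨h1, h2⟩; constructor <;> [linarith; linarith]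
    · rintro ⟨h1, h2⟩; constructor <;> [linarith; linarith]
  set S : Set (Fin N → ℝ) := {h | h ∈ cubeVerts N ∧ dotp c h = 0 ∧ 0 ≤ dotp d h} with hS
  set B : Set (Fin N → ℝ) := {x | x ∈ unitCube N ∧ dotp c x = 0 ∧ 0 ≤ dotp d x} with hB
  have hLB : {x ∈ unitCube N | dotp xk x = dotp xj x ∧ dotp xj x ≥ dotp xl x} = B := by
    ext x
    simp only [Set.mem_setOf_eq, hB]
    exact and_congr_right fun _ => hiff x
  have hRS : {h ∈ cubeVerts N | dotp xk h = dotp xj h ∧ dotp xj h ≥ dotp xl h} = S := by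
    ext x
    simp only [Set.mem_setOf_eq, hS]
    exact and_congr_right fun _ => hiff x
  rw [hLB, hRS]
  -- basic facts
  have dotp_lin : ∀ (a : Fin N → ℝ) (u w : ℝ) (x y : Fin N → ℝ),
      dotp a (u • x + w • y) = u * dotp a x + w * dotp a y := by
    intro a u w x y
    rw [dotp_add, dotp_smul, dotp_smul]
  have hpiC : unitCube N = Set.pi Set.univ (fun _ : Fin N => Set.Icc (0:ℝ) 1) := by
    ext x
    simp only [unitCube, Set.mem_setOf_eq, Set.mem_pi, Set.mem_univ, true_implies]
  have hconvB : Convex ℝ B := by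
    intro x hx y hy u w hu hw huw
    refine ⟨fun i => ?_, ?_, ?_⟩
    · have h1 := hx.1 i
      have h2 := hy.1 i
      simp only [Set.mem_Icc] at h1 h2 ⊢
      simp only [Pi.add_apply, Pi.smul_apply, smul_eq_mul]
      constructor
      · nlinarith
      · nlinarith
    · rw [dotp_lin, hx.2.1, hy.2.1]; ring
    · rw [dotp_lin]
      have := mul_nonneg hu hx.2.2
      have := mul_nonneg hw hy.2.2
      linarith
  have hcubeC : IsCompact (unitCube N) := by
    rw [hpiC]; exact isCompact_univ_pi fun _ => isCompact_Icc
  have hBclosed : IsClosed B := by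
    have h1 : IsClosed (unitCube N) := by
      rw [hpiC]; exact isClosed_set_pi fun i _ => isClosed_Icc
    have h2 : IsClosed {x : Fin N → ℝ | dotp c x = 0} :=
      isClosed_eq (dotp_cont c) continuous_const
    have h3 : IsClosed {x : Fin N → ℝ | 0 ≤ dotp d x} :=
      isClosed_le continuous_const (dotp_cont d)
    have : B = unitCube N ∩ ({x | dotp c x = 0} ∩ {x | 0 ≤ dotp d x}) := by
      ext x
      constructor
      · rintro ⟨a, b, c⟩; exact ⟨a, b, c⟩
      · rintro ⟨a, b, c⟩; exact ⟨a, b, c⟩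
    rw [this]
    exact h1.inter (h2.inter h3)
  have hBcomp : IsCompact B := hcubeC.of_isClosed_subset hBclosed fun x hx => hx.1
  have hSfin : S.Finite := by
    have hvfin : (cubeVerts N).Finite := by
      have hsub : cubeVerts N ⊆ Set.pi Set.univ (fun _ : Fin N => ({0, 1} : Set ℝ)) := by
        intro x hx
        intro i _
        rcases hx i with h | h <;> simp [h]
      exact Set.Finite.subset (Set.Finite.pi fun _ => (Set.finite_singleton (1:ℝ)).insert 0) hsub
    exact hvfin.subset fun h hh => hh.1
  have hSB : S ⊆ B := by
    rintro h ⟨hv, hcon⟩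
    refine ⟨fun i => ?_, hcon⟩
    rcases hv i with h' | h' <;> rw [h'] <;> simp
  have hextS : B.extremePoints ℝ ⊆ S := by
    intro x hx
    have hxB : x ∈ B := hx.1
    refine ⟨fun i => ?_, hxB.2⟩
    by_contra hi
    push_neg at hi
    have hcube' : ∀ i, 0 ≤ x i ∧ x i ≤ 1 := fun i => Set.mem_Icc.mp (hxB.1 i)
    have h0 : 0 < x i := lt_of_le_of_ne (hcube' i).1 (Ne.symm hi.1)
    have h1 : x i < 1 := lt_of_le_of_ne (hcube' i).2 hi.2
    obtain ⟨v, hv0, hvsupp, hcv, hdisj⟩ :=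
      exists_dir_s4 c d x hcint hdint hcd hcube' hxB.2.1 hxB.2.2 i h0 h1
    obtain ⟨ε, hε, hεP⟩ := perturb c d x v hcube' hxB.2.1 hxB.2.2 hv0 hvsupp hcv hdisj
    have h1' := hεP ε (by rw [abs_of_pos hε])
    have h2' := hεP (-ε) (by rw [abs_neg, abs_of_pos hε])
    have h1B : x + ε • v ∈ B := ⟨fun i => Set.mem_Icc.2 ((h1'.1) i), h1'.2.1, h1'.2.2⟩
    have h2B : x + (-ε) • v ∈ B := ⟨fun i => Set.mem_Icc.2 ((h2'.1) i), h2'.2.1, h2'.2.2⟩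
    have hseg : x ∈ openSegment ℝ (x + ε • v) (x + (-ε) • v) := by
      refine ⟨1/2, 1/2, by norm_num, by norm_num, by norm_num, ?_⟩
      module
    have hres := hx.2 h1B h2B hseg
    have hzero : ε • v = 0 := by
      have := hres
      have h' : x + ε • v = x + 0 := by rw [add_zero]; exact this
      exact add_left_cancel h'
    rcases smul_eq_zero.1 hzero with h' | h'
    · exact absurd h' (ne_of_gt hε)
    · exact hv0 h'
  apply Set.Subset.antisymm
  · have KM : closure (convexHull ℝ (B.extremePoints ℝ)) = B :=
      closure_convexHull_extremePoints hBcomp hconvB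
    calc B = closure (convexHull ℝ (B.extremePoints ℝ)) := KM.symm
      _ ⊆ closure (convexHull ℝ S) := closure_mono (convexHull_mono hextS)
      _ = convexHull ℝ S := (hSfin.isClosed_convexHull (𝕜 := ℝ)).closure_eq
  · exact convexHull_min hSB hconvB
end

section
/- Let X ⊆ {0,1}^N be finite and nonempty, x_k ∈ X, z ∈ [0,1]^N with x_k·z > x·z for every x ∈ X with x ≠ x_k, and let h ∈ {0,1}^N be a vertex with x_j·h > x_k·h for some x_j ∈ X. Then there exists μ with 0 < μ < 1 and x_o ∈ X such that for z' = μh + (1-μ)z we have x_k·z' = x_o·z' and x_k·z' ≥ x·z' for all x ∈ X. -/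
lemma dotp_comb {N : ℕ} (a h z : Fin N → ℝ) (μ c : ℝ) :
    dotp a (μ • h + c • z) = μ * dotp a h + c * dotp a z := by
  simp only [dotp, Pi.add_apply, Pi.smul_apply, smul_eq_mul, mul_add,
    Finset.sum_add_distrib, Finset.mul_sum]
  congr 1 <;> exact Finset.sum_congr rfl (fun i _ => by ring)

theorem stmt_19 {N : ℕ} (X : Set (Fin N → ℝ)) (hX : X ⊆ cubeVerts N)
    (hfin : X.Finite) (hne : X.Nonempty) (xk : Fin N → ℝ) (hxk : xk ∈ X)
    (z : Fin N → ℝ) (hz : ∀ i, z i ∈ Set.Icc (0:ℝ) 1)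
    (hopt : ∀ x ∈ X, x ≠ xk → dotp xk z > dotp x z)
    (h : Fin N → ℝ) (hh : h ∈ cubeVerts N)
    (hbad : ∃ xj ∈ X, dotp xj h > dotp xk h) :
    ∃ (μ : ℝ), 0 < μ ∧ μ < 1 ∧ ∃ xo ∈ X,
      dotp xk (μ • h + (1 - μ) • z) = dotp xo (μ • h + (1 - μ) • z) ∧
      ∀ x ∈ X, dotp xk (μ • h + (1 - μ) • z) ≥ dotp x (μ • h + (1 - μ) • z) := by
  classical
  set B : Set (Fin N → ℝ) := {x | x ∈ X ∧ dotp xk h < dotp x h} with hB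
  have hBsub : B ⊆ X := fun x hx => hx.1
  have hBfin : B.Finite := hfin.subset hBsub
  have hBne : B.Nonempty := by
    obtain ⟨xj, hxj, hgt⟩ := hbad
    exact ⟨xj, hxj, hgt⟩
  -- g x is the crossing parameter for x
  set g : (Fin N → ℝ) → ℝ := fun x =>
    (dotp xk z - dotp x z) / ((dotp xk z - dotp x z) + (dotp x h - dotp xk h)) with hg
  obtain ⟨xo, hxoB, hmin⟩ := Set.exists_min_image B g hBfin hBne
  -- Facts about elements of B
  have key : ∀ x ∈ B, 0 < dotp xk z - dotp x z ∧ 0 < dotp x h - dotp xk h := by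
    intro x hx
    have hxne : x ≠ xk := by
      intro hxx; rw [hxx] at hx; exact lt_irrefl _ hx.2
    exact ⟨sub_pos.mpr (hopt x hx.1 hxne), sub_pos.mpr hx.2⟩
  obtain ⟨hbo, hao⟩ := key xo hxoB
  set bo := dotp xk z - dotp xo z
  set ao := dotp xo h - dotp xk h
  have hden : 0 < bo + ao := by linarith
  set μ := g xo with hμ
  have hμval : μ = bo / (bo + ao) := rfl
  have hμ0 : 0 < μ := by rw [hμval]; positivity
  have hμ1 : μ < 1 := by
    rw [hμval, div_lt_one hden]; linarith
  refine ⟨μ, hμ0, hμ1, xo, hBsub hxoB, ?_, ?_⟩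
  · rw [dotp_comb, dotp_comb]
    have this' : μ * ((dotp xk z - dotp xo z) + (dotp xo h - dotp xk h)) = dotp xk z - dotp xo z := by
      rw [hμval, div_mul_cancel₀]; exact ne_of_gt hden
    linear_combination -this'
  · intro x hxX
    rw [dotp_comb, dotp_comb]
    by_cases hxB : x ∈ B
    · obtain ⟨hbx, hax⟩ := key x hxB
      have hle : μ ≤ (dotp xk z - dotp x z) / ((dotp xk z - dotp x z) + (dotp x h - dotp xk h)) :=
        hmin x hxB
      have hdenx : 0 < (dotp xk z - dotp x z) + (dotp x h - dotp xk h) := by linarith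
      rw [le_div_iff₀ hdenx] at hle
      nlinarith [hle]
    · -- x ∉ B : either x = xk or dotp x h ≤ dotp xk h
      have hax : dotp x h ≤ dotp xk h := by
        by_contra hc
        exact hxB ⟨hxX, lt_of_not_ge hc⟩
      by_cases hxk' : x = xk
      · subst hxk'; linarith
      · have hbx : dotp x z < dotp xk z := hopt x hxX hxk'
        nlinarith
end
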